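/- Let (Ω, μ) be a finite measure space with normalized expectation E, U ≥ 0 with E[U] = 1 and E[|U^{2+c'} log U|] < ∞ for some c' > 0. Then cov(−U log U, U) ≥ log(1/p*) − E[U² log U], where p* = μ(U>0)/μ(Ω), with equality when U ∈ {0, 1/p*} almost everywhere. -/

import Mathlib

open MeasureTheory Real Set

/-- Infinitary selective speed limit: `cov(−U log U, U) ≥ log(1/p*) − E[U² log U]`,
with equality when `U ∈ {0, 1/p*}` almost everywhere (selective equilibrium). -/
theorem selective_speed_limit
    {Ω : Type*} [MeasurableSpace Ω] (μ : Measure Ω) [IsFiniteMeasure μ]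
    (hN : 0 < (μ univ).toReal)
    (U : Ω → ℝ) (hUm : Measurable U) (hU0 : ∀ x, 0 ≤ U x)
    (hU1 : (∫ x, U x ∂μ) / (μ univ).toReal = 1)
    (c' : ℝ) (hc' : 0 < c')
    (hmom : Integrable (fun x => U x ^ ((2 : ℝ) + c') * Real.log (U x)) μ)
    (hent1 : Integrable (fun x => U x * Real.log (U x)) μ)
    (hent2 : Integrable (fun x => (U x) ^ 2 * Real.log (U x)) μ) :
    let N := (μ univ).toReal
    let pstar := (μ {x | 0 < U x}).toReal / N
    let c := (∫ x, -(U x * Real.log (U x)) * (U x - 1) ∂μ) / N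
    c ≥ Real.log (1 / pstar) - (∫ x, (U x) ^ 2 * Real.log (U x) ∂μ) / N ∧
      ((∀ᵐ x ∂μ, U x = 0 ∨ U x = 1 / pstar) →
        c = Real.log (1 / pstar) - (∫ x, (U x) ^ 2 * Real.log (U x) ∂μ) / N) := by
  intro N pstar c
  have hNne : N ≠ 0 := ne_of_gt hN
  have hUint : Integrable U μ := by
    by_contra h
    rw [integral_undef h] at hU1
    rw [zero_div] at hU1
    exact zero_ne_one hU1
  have hIU : ∫ x, U x ∂μ = N := (div_eq_one_iff_eq hNne).mp hU1
  have hA : MeasurableSet {x | 0 < U x} := measurableSet_lt measurable_const hUm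
  have hμAt : μ {x | 0 < U x} ≠ ⊤ := measure_ne_top μ _
  have hμA0 : μ {x | 0 < U x} ≠ 0 := by
    intro h0
    have hae : ∀ᵐ x ∂μ, U x = 0 := by
      have hae' : ∀ᵐ x ∂μ, ¬ (0 < U x) := by
        rw [ae_iff]; simpa using h0
      filter_upwards [hae'] with x hx
      exact le_antisymm (not_lt.mp hx) (hU0 x)
    have h0' : ∫ x, U x ∂μ = 0 := by
      rw [integral_congr_ae hae]; simp
    rw [hIU] at h0'; exact hNne h0'
  have hpA : 0 < (μ {x | 0 < U x}).toReal := ENNReal.toReal_pos hμA0 hμAt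
  set m : ℝ := N / (μ {x | 0 < U x}).toReal with hm_def
  have hm : 0 < m := div_pos hN hpA
  have h1p : 1 / pstar = m := by
    show 1 / ((μ {x | 0 < U x}).toReal / N) = m
    rw [one_div_div]
  -- pointwise Jensen (tangent line) inequality
  have hpt : ∀ x, U x * (Real.log m + 1) - ({x | 0 < U x}).indicator (fun _ => m) x
      ≤ U x * Real.log (U x) := by
    intro x
    by_cases hx : 0 < U x
    · rw [Set.indicator_apply, if_pos (show x ∈ {x | 0 < U x} from hx)]
      have h1 : Real.log (m / U x) ≤ m / U x - 1 :=
        Real.log_le_sub_one_of_pos (div_pos hm hx)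
      rw [Real.log_div (ne_of_gt hm) (ne_of_gt hx)] at h1
      have h2 : U x * (Real.log m - Real.log (U x)) ≤ U x * (m / U x - 1) :=
        mul_le_mul_of_nonneg_left h1 hx.le
      have h3 : U x * (m / U x) = m := by field_simp
      nlinarith [h2, h3]
    · have hx0 : U x = 0 := le_antisymm (not_lt.mp hx) (hU0 x)
      rw [Set.indicator_apply, if_neg (show x ∉ {x | 0 < U x} from hx), hx0]; simp
  have hLint : Integrable
      (fun x => U x * (Real.log m + 1) - ({x | 0 < U x}).indicator (fun _ => m) x) μ :=
    (hUint.mul_const _).sub ((integrable_const m).indicator hA)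
  have hmono := integral_mono hLint hent1 hpt
  have hIL : ∫ x, (U x * (Real.log m + 1) - ({x | 0 < U x}).indicator (fun _ => m) x) ∂μ
      = N * (Real.log m + 1) - m * (μ {x | 0 < U x}).toReal := by
    rw [integral_sub (hUint.mul_const _) ((integrable_const m).indicator hA),
        integral_mul_const, hIU, integral_indicator_const _ hA, smul_eq_mul, measureReal_def]
    ring
  have hmN : m * (μ {x | 0 < U x}).toReal = N := by
    rw [hm_def, div_mul_cancel₀ _ (ne_of_gt hpA)]
  have hmain : N * Real.log m ≤ ∫ x, U x * Real.log (U x) ∂μ := by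
    rw [hIL, hmN] at hmono; linarith
  have hceq : (∫ x, -(U x * Real.log (U x)) * (U x - 1) ∂μ)
      = (∫ x, U x * Real.log (U x) ∂μ) - ∫ x, (U x) ^ 2 * Real.log (U x) ∂μ := by
    rw [← integral_sub hent1 hent2]
    exact integral_congr_ae (Filter.Eventually.of_forall fun x => by ring)
  constructor
  · show (∫ x, -(U x * Real.log (U x)) * (U x - 1) ∂μ) / N
      ≥ Real.log (1 / pstar) - (∫ x, (U x) ^ 2 * Real.log (U x) ∂μ) / N
    rw [hceq, h1p, sub_div]
    have hle : Real.log m ≤ (∫ x, U x * Real.log (U x) ∂μ) / N := by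
      rw [le_div_iff₀ hN]; linarith
    linarith
  · intro heq
    have hae2 : (fun x => U x * Real.log (U x)) =ᵐ[μ] fun x => U x * Real.log m := by
      filter_upwards [heq] with x hx
      rcases hx with h0 | hmx
      · simp [h0]
      · rw [hmx, h1p]
    have hI2 : ∫ x, U x * Real.log (U x) ∂μ = N * Real.log m := by
      rw [integral_congr_ae hae2, integral_mul_const, hIU]
    show (∫ x, -(U x * Real.log (U x)) * (U x - 1) ∂μ) / N
      = Real.log (1 / pstar) - (∫ x, (U x) ^ 2 * Real.log (U x) ∂μ) / N
    rw [hceq, h1p, hI2, sub_div]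
    congr 1
    field_simp
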